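/- Let z₀ ∈ ℂ and let φ : ℂ → ℝ be nonnegative, integrable on B(z₀,e), and have global finite mean oscillation at z₀ with maximal dispersion δ∞ = sup_{R > e^e} (1/m(B(z₀,R))) ∫_{B(z₀,R)} |φ − φ̄_R| dm < ∞. Then for every R > e^e, ∫_{A(z₀,e,R)} φ(z) / (|z − z₀| log|z − z₀|)² dm(z) ≤ C · log log R, where C = (π/6)((24 + π²)e²δ∞ + 2π²φ₀) and φ₀ is the mean value of φ over B(z₀,e). -/

import Mathlib

open MeasureTheory Metric Filter

/-- The mean value of `φ` over the disk `B(z₀, R)` (planar Lebesgue measure). -/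
noncomputable def meanOver (z₀ : ℂ) (φ : ℂ → ℝ) (R : ℝ) : ℝ :=
  (∫ z in ball z₀ R, φ z) / (volume (ball z₀ R)).toReal

/-- The mean oscillation `(1/m(B(z₀,R))) ∫_{B(z₀,R)} |φ - φ̄_R| dm`. -/
noncomputable def meanDev (z₀ : ℂ) (φ : ℂ → ℝ) (R : ℝ) : ℝ :=
  (∫ z in ball z₀ R, |φ z - meanOver z₀ φ R|) / (volume (ball z₀ R)).toReal

namespace St4
open Real

variable {z₀ : ℂ} {φ : ℂ → ℝ}

lemma vb_eq (z₀ : ℂ) {r : ℝ} (hr : 0 ≤ r) :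
    (volume (ball z₀ r)).toReal = π * r ^ 2 := by
  rw [Complex.volume_ball]
  rw [ENNReal.toReal_mul, ENNReal.toReal_pow, ENNReal.toReal_ofReal hr]
  simp [NNReal.coe_real_pi, mul_comm]

lemma vb_pos (z₀ : ℂ) {r : ℝ} (hr : 0 < r) :
    0 < (volume (ball z₀ r)).toReal := by
  rw [vb_eq z₀ hr.le]; positivity

section
variable (hpos : ∀ z, 0 ≤ φ z) (hInt : ∀ R > 0, IntegrableOn φ (ball z₀ R) volume)
include hInt

lemma integral_ball_eq {r : ℝ} (hr : 0 < r) :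
    ∫ z in ball z₀ r, φ z = meanOver z₀ φ r * (volume (ball z₀ r)).toReal := by
  rw [meanOver, div_mul_cancel₀]
  exact (vb_pos z₀ hr).ne'

omit hInt in
lemma mean_nonneg (hpos : ∀ z, 0 ≤ φ z) {r : ℝ} : 0 ≤ meanOver z₀ φ r := by
  apply div_nonneg _ ENNReal.toReal_nonneg
  exact setIntegral_nonneg measurableSet_ball fun z _ => hpos z

omit hInt in
lemma dev_nonneg {r : ℝ} : 0 ≤ meanDev z₀ φ r := by
  apply div_nonneg _ ENNReal.toReal_nonneg
  exact setIntegral_nonneg measurableSet_ball fun z _ => abs_nonneg _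

lemma intOn_sub {r : ℝ} (hr : 0 < r) (c : ℝ) :
    IntegrableOn (fun z => φ z - c) (ball z₀ r) volume :=
  (hInt r hr).sub (integrableOn_const measure_ball_lt_top.ne)

lemma integral_sub_mean {r : ℝ} (hr : 0 < r) :
    ∫ z in ball z₀ r, (φ z - meanOver z₀ φ r) = 0 := by
  rw [integral_sub (hInt r hr) (integrableOn_const measure_ball_lt_top.ne),
    integral_const, integral_ball_eq hInt hr]
  rw [measureReal_restrict_apply_univ, smul_eq_mul, measureReal_def]; ring

lemma half_pos {r : ℝ} (hr : 0 < r) :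
    ∫ z in ball z₀ r, max (φ z - meanOver z₀ φ r) 0
      = meanDev z₀ φ r * (volume (ball z₀ r)).toReal / 2 := by
  have h1 : ∀ z, max (φ z - meanOver z₀ φ r) 0
      = ((φ z - meanOver z₀ φ r) + |φ z - meanOver z₀ φ r|) / 2 := by
    intro z; rcases le_or_gt (φ z - meanOver z₀ φ r) 0 with h | h
    · rw [max_eq_right h, abs_of_nonpos h]; ring
    · rw [max_eq_left h.le, abs_of_pos h]; ring
  simp_rw [h1]
  rw [integral_div, integral_add (intOn_sub hInt hr _) ((intOn_sub hInt hr _).abs),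
    integral_sub_mean hInt hr, zero_add, meanDev]
  rw [div_mul_cancel₀]
  exact (vb_pos z₀ hr).ne'

lemma half_neg {r : ℝ} (hr : 0 < r) :
    ∫ z in ball z₀ r, max (meanOver z₀ φ r - φ z) 0
      = meanDev z₀ φ r * (volume (ball z₀ r)).toReal / 2 := by
  have h1 : ∀ z, max (meanOver z₀ φ r - φ z) 0
      = ((meanOver z₀ φ r - φ z) + |φ z - meanOver z₀ φ r|) / 2 := by
    intro z; rw [abs_sub_comm]
    rcases le_or_gt (meanOver z₀ φ r - φ z) 0 with h | h
    · rw [max_eq_right h, abs_of_nonpos h]; ring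
    · rw [max_eq_left h.le, abs_of_pos h]; ring
  simp_rw [h1]
  have hi2 : IntegrableOn (fun z => meanOver z₀ φ r - φ z) (ball z₀ r) volume :=
    (integrableOn_const measure_ball_lt_top.ne).sub (hInt r hr)
  have hz : ∫ z in ball z₀ r, (meanOver z₀ φ r - φ z) = 0 := by
    have h3 := integral_sub_mean hInt hr
    have h4 : (fun z => meanOver z₀ φ r - φ z) = fun z => -(φ z - meanOver z₀ φ r) := by
      funext z; ring
    rw [h4, integral_neg, h3, neg_zero]
  rw [integral_div, integral_add hi2 ((intOn_sub hInt hr _).abs), hz, zero_add, meanDev]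
  rw [div_mul_cancel₀]
  exact (vb_pos z₀ hr).ne'


omit hInt in
lemma psiInt (u v : ℝ) (h1 : 1 ≤ u) (huv : u ≤ v) :
    ∫ z in ball z₀ (exp v) \ ball z₀ (exp u),
      (1:ℝ) / (dist z z₀ * Real.log (dist z z₀)) ^ 2 = 2 * π * (1/u - 1/v) := by
  set F : ℝ → ℝ := fun y => 1 / (y * Real.log y) ^ 2 with hF
  -- step 1: translate to z₀ = 0
  have step1 : ∫ z in ball z₀ (exp v) \ ball z₀ (exp u),
      (1:ℝ) / (dist z z₀ * Real.log (dist z z₀)) ^ 2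
      = ∫ w in ball (0:ℂ) (exp v) \ ball (0:ℂ) (exp u), F ‖w‖ := by
    have hme : MeasurableSet (ball (0:ℂ) (exp v) \ ball (0:ℂ) (exp u)) :=
      measurableSet_ball.diff measurableSet_ball
    have hme2 : MeasurableSet (ball z₀ (exp v) \ ball z₀ (exp u)) :=
      measurableSet_ball.diff measurableSet_ball
    rw [← integral_indicator hme2, ← integral_indicator hme]
    rw [← integral_add_right_eq_self _ z₀]  -- ∫ x, f (x + z₀) = ∫ x, f x  ?
    congr 1
    funext z
    simp only [Set.indicator, Set.mem_diff, mem_ball, dist_eq_norm]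
    have h3 : ∀ r : ℝ, (dist (z + z₀) z₀ < r) = (‖z‖ < r) := by
      intro r; rw [dist_eq_norm]; simp
    simp only [Complex.dist_eq, add_sub_cancel_right]
    simp [hF, sub_zero]
  rw [step1]
  -- step 2: to radial integral over Ioi 0
  have hindA : ∀ w : ℂ, Set.indicator (Set.Ico (exp u) (exp v)) F ‖w‖
      = Set.indicator (ball (0:ℂ) (exp v) \ ball (0:ℂ) (exp u)) (fun z => F ‖z‖) w := by
    intro w
    simp only [Set.indicator, Set.mem_Ico, Set.mem_diff, mem_ball_zero_iff]
    congr 1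
    simp only [eq_iff_iff, not_lt]
    tauto
  have hme : MeasurableSet (ball (0:ℂ) (exp v) \ ball (0:ℂ) (exp u)) :=
      measurableSet_ball.diff measurableSet_ball
  rw [← integral_indicator hme]
  have step2 := MeasureTheory.integral_fun_norm_addHaar (volume : Measure ℂ)
      (Set.indicator (Set.Ico (exp u) (exp v)) F)
  simp_rw [hindA] at step2
  rw [step2]
  rw [Complex.finrank_real_complex]
  have hvol : (volume (ball (0:ℂ) 1)).toReal = π := by
    rw [Complex.volume_ball]
    simp [NNReal.coe_real_pi]
  rw [measureReal_def, hvol]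
  have hEq : ∀ y : ℝ, y ^ (2-1) • (Set.Ico (exp u) (exp v)).indicator F y
      = Set.indicator (Set.Ico (exp u) (exp v)) (fun y => 1 / (y * (Real.log y)^2)) y := by
    intro y
    simp only [Set.indicator, Set.mem_Ico, pow_one, smul_eq_mul, hF]
    split_ifs with h
    · have hy : (0:ℝ) < y := lt_of_lt_of_le (exp_pos u) h.1
      have hly : (0:ℝ) < Real.log y := by
        calc (0:ℝ) < u := lt_of_lt_of_le one_pos h1
        _ = Real.log (exp u) := (Real.log_exp u).symm
        _ ≤ Real.log y := Real.log_le_log (exp_pos u) h.1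
      field_simp
      ring
    · simp
  simp_rw [hEq]
  rw [integral_indicator measurableSet_Ico, Measure.restrict_restrict measurableSet_Ico]
  have hsub : Set.Ico (exp u) (exp v) ∩ Set.Ioi 0 = Set.Ico (exp u) (exp v) :=
    Set.inter_eq_left.2 (fun y hy => lt_of_lt_of_le (exp_pos u) hy.1)
  rw [hsub]
  have heuv : exp u ≤ exp v := exp_le_exp.2 huv
  rw [MeasureTheory.integral_Ico_eq_integral_Ioo,
    ← MeasureTheory.integral_Ioc_eq_integral_Ioo,
    ← intervalIntegral.integral_of_le heuv]
  have hftc : ∫ y in (exp u)..(exp v), 1 / (y * (Real.log y)^2)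
      = -(Real.log (exp v))⁻¹ - -(Real.log (exp u))⁻¹ := by
    apply intervalIntegral.integral_eq_sub_of_hasDerivAt (f := fun y => -(Real.log y)⁻¹)
    · intro y hy
      rw [Set.uIcc_of_le heuv] at hy
      have hy0 : (0:ℝ) < y := lt_of_lt_of_le (exp_pos u) hy.1
      have hly : (0:ℝ) < Real.log y := by
        calc (0:ℝ) < u := lt_of_lt_of_le one_pos h1
        _ = Real.log (exp u) := (Real.log_exp u).symm
        _ ≤ Real.log y := Real.log_le_log (exp_pos u) hy.1
      have hd : HasDerivAt (fun y => -(Real.log y)⁻¹) ((1/y)/(Real.log y)^2) y := by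
        have := ((Real.hasDerivAt_log hy0.ne').inv hly.ne').neg
        exact this.congr_deriv (by ring)
      exact hd.congr_deriv (by ring)
    · apply ContinuousOn.intervalIntegrable
      apply ContinuousOn.div continuousOn_const
      · exact (continuousOn_id.mul ((Real.continuousOn_log.mono (by
          intro y hy
          rw [Set.uIcc_of_le heuv] at hy
          exact (ne_of_gt (lt_of_lt_of_le (exp_pos u) hy.1))
          )).pow 2))
      · intro y hy
        rw [Set.uIcc_of_le heuv] at hy
        have hy0 : (0:ℝ) < y := lt_of_lt_of_le (exp_pos u) hy.1
        have hly : (0:ℝ) < Real.log y := by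
          calc (0:ℝ) < u := lt_of_lt_of_le one_pos h1
          _ = Real.log (exp u) := (Real.log_exp u).symm
          _ ≤ Real.log y := Real.log_le_log (exp_pos u) hy.1
        positivity
  rw [hftc, Real.log_exp, Real.log_exp]
  have hu0 : (0:ℝ) < u := lt_of_lt_of_le one_pos h1
  have hv0 : (0:ℝ) < v := lt_of_lt_of_le hu0 huv
  simp only [smul_eq_mul, Nat.cast_ofNat]
  ring
lemma mean_step {u v : ℝ} (hu : 0 < u) (huv : u ≤ v) :
    meanOver z₀ φ v ≤ meanOver z₀ φ u + (v/u)^2 * meanDev z₀ φ v / 2 := by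
  have hv : 0 < v := lt_of_lt_of_le hu huv
  have hvbu := vb_pos z₀ hu
  have hvbv := vb_pos z₀ hv
  set c := meanOver z₀ φ v with hc
  have hconst : IntegrableOn (fun _ : ℂ => c) (ball z₀ u) volume :=
    integrableOn_const measure_ball_lt_top.ne
  have h1 : ∫ z in ball z₀ u, (c - φ z) ≤ ∫ z in ball z₀ u, max (c - φ z) 0 := by
    apply integral_mono (hconst.sub (hInt u hu))
    · exact (hconst.sub (hInt u hu)).pos_part
    · intro z; exact le_max_left _ _
  have h2 : ∫ z in ball z₀ u, max (c - φ z) 0 ≤ ∫ z in ball z₀ v, max (c - φ z) 0 := by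
    apply setIntegral_mono_set
    · exact ((integrableOn_const measure_ball_lt_top.ne).sub (hInt v hv)).pos_part
    · exact Filter.Eventually.of_forall (fun z => le_max_right _ _)
    · exact HasSubset.Subset.eventuallyLE (ball_subset_ball (by linarith))
  have h3 : ∫ z in ball z₀ v, max (c - φ z) 0
      = meanDev z₀ φ v * (volume (ball z₀ v)).toReal / 2 := half_neg hInt hv
  have h4 : ∫ z in ball z₀ u, (c - φ z)
      = c * (volume (ball z₀ u)).toReal - ∫ z in ball z₀ u, φ z := by
    rw [integral_sub hconst (hInt u hu), integral_const, measureReal_restrict_apply_univ,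
      smul_eq_mul, mul_comm, measureReal_def]
  have h5 : ∫ z in ball z₀ u, φ z = meanOver z₀ φ u * (volume (ball z₀ u)).toReal :=
    integral_ball_eq hInt hu
  have hkey : c * (volume (ball z₀ u)).toReal
      - meanOver z₀ φ u * (volume (ball z₀ u)).toReal
      ≤ meanDev z₀ φ v * (volume (ball z₀ v)).toReal / 2 := by linarith
  rw [vb_eq z₀ hu.le, vb_eq z₀ hv.le] at hkey
  have hr2 : (v/u)^2 * meanDev z₀ φ v / 2 * (π * u^2) = meanDev z₀ φ v * (π * v^2) / 2 := by
    field_simp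
  nlinarith [hkey, hr2, mul_pos Real.pi_pos (pow_pos hu 2)]

omit hInt in
lemma measurable_psi (z₀ : ℂ) : Measurable fun z : ℂ =>
    (1:ℝ) / (dist z z₀ * Real.log (dist z z₀)) ^ 2 := by
  have m1 : Measurable fun z : ℂ => dist z z₀ := (continuous_id.dist continuous_const).measurable
  have m2 : Measurable fun z : ℂ => Real.log (dist z z₀) := Real.measurable_log.comp m1
  simp_rw [one_div]
  exact ((m1.mul m2).pow_const 2).inv

omit hInt in
lemma psi_pointwise {u : ℝ} (hu : 1 ≤ u) {z : ℂ} (hz : exp u ≤ dist z z₀) :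
    (1:ℝ) / (dist z z₀ * Real.log (dist z z₀)) ^ 2 ≤ 1 / (exp u * u) ^ 2 := by
  have hd0 : (0:ℝ) < dist z z₀ := lt_of_lt_of_le (exp_pos u) hz
  have hlog : u ≤ Real.log (dist z z₀) := by
    calc u = Real.log (exp u) := (Real.log_exp u).symm
    _ ≤ Real.log (dist z z₀) := Real.log_le_log (exp_pos u) hz
  have hu0 : (0:ℝ) < u := lt_of_lt_of_le one_pos hu
  have hprod : exp u * u ≤ dist z z₀ * Real.log (dist z z₀) :=
    mul_le_mul hz hlog hu0.le hd0.le
  have hpp : (0:ℝ) < exp u * u := by positivity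
  apply one_div_le_one_div_of_le (by positivity)
  exact pow_le_pow_left₀ hpp.le hprod 2

omit hInt in
lemma psi_sq_pos {u : ℝ} (hu : 1 ≤ u) {z : ℂ} (hz : exp u ≤ dist z z₀) :
    (0:ℝ) < (dist z z₀ * Real.log (dist z z₀)) ^ 2 := by
  have hd0 : (0:ℝ) < dist z z₀ := lt_of_lt_of_le (exp_pos u) hz
  have hlog : u ≤ Real.log (dist z z₀) := by
    calc u = Real.log (exp u) := (Real.log_exp u).symm
    _ ≤ Real.log (dist z z₀) := Real.log_le_log (exp_pos u) hz
  have hu0 : (0:ℝ) < u := lt_of_lt_of_le one_pos hu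
  exact pow_pos (mul_pos hd0 (lt_of_lt_of_le hu0 hlog)) 2

omit hInt in
lemma intOn_psi {u : ℝ} (hu : 1 ≤ u) {G : Set ℂ} (hG : MeasurableSet G)
    (hfin : volume G ≠ ⊤) (hd : ∀ z ∈ G, exp u ≤ dist z z₀) :
    IntegrableOn (fun z => (1:ℝ) / (dist z z₀ * Real.log (dist z z₀)) ^ 2) G volume := by
  apply Measure.integrableOn_of_bounded hfin (measurable_psi z₀).aestronglyMeasurable
  rw [ae_restrict_iff' hG]
  apply Filter.Eventually.of_forall
  intro z hz
  rw [Real.norm_eq_abs, abs_of_nonneg (by positivity)]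
  exact psi_pointwise hu (hd z hz)


lemma intOn_phipsi {u r : ℝ} (hu : 1 ≤ u) (hr : 0 < r) {G : Set ℂ} (hG : MeasurableSet G)
    (hsub : G ⊆ ball z₀ r) (hd : ∀ z ∈ G, exp u ≤ dist z z₀) :
    IntegrableOn (fun z => φ z / (dist z z₀ * Real.log (dist z z₀)) ^ 2) G volume := by
  have hφ : IntegrableOn φ G volume := (hInt r hr).mono_set hsub
  have hb : Integrable (fun z =>
      (G.indicator (fun z => (1:ℝ) / (dist z z₀ * Real.log (dist z z₀)) ^ 2) z) * φ z)
      (volume.restrict G) := by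
    apply Integrable.bdd_mul (c := 1/(exp u * u)^2) hφ
    · exact ((measurable_psi z₀).indicator hG).aestronglyMeasurable
    · refine Filter.Eventually.of_forall (fun z => ?_)
      rw [Real.norm_eq_abs]
      rcases em (z ∈ G) with h | h
      · rw [Set.indicator_of_mem h, abs_of_nonneg (by positivity)]
        exact psi_pointwise hu (hd z h)
      · rw [Set.indicator_of_notMem h, abs_zero]
        positivity
  apply hb.congr
  rw [Filter.EventuallyEq, ae_restrict_iff' hG]
  apply Filter.Eventually.of_forall
  intro z hz
  rw [Set.indicator_of_mem hz]
  field_simp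

lemma ann_est (hpos : ∀ z, 0 ≤ φ z) {u v : ℝ} (hu : 1 ≤ u) (huv : u ≤ v) {G : Set ℂ}
    (hG : MeasurableSet G) (hsub : G ⊆ ball z₀ (exp v) \ ball z₀ (exp u)) {B δ' : ℝ}
    (hdev : meanDev z₀ φ (exp v) ≤ δ') (hB : meanOver z₀ φ (exp v) ≤ B) (hB0 : 0 ≤ B) :
    ∫ z in G, φ z / (dist z z₀ * Real.log (dist z z₀)) ^ 2
      ≤ (π * (exp v)^2 / (exp u * u)^2) * δ' / 2 + B * (2*π*(1/u - 1/v)) := by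
  have hd : ∀ z ∈ G, exp u ≤ dist z z₀ := fun z hz =>
    le_of_not_gt (fun h => (hsub hz).2 (mem_ball.2 h))
  have hsubv : G ⊆ ball z₀ (exp v) := fun z hz => (hsub hz).1
  have hfin : volume G ≠ ⊤ :=
    ((measure_mono hsubv).trans_lt measure_ball_lt_top).ne
  set c := meanOver z₀ φ (exp v) with hc
  have hc0 : 0 ≤ c := mean_nonneg hpos
  set K := (1:ℝ)/(exp u * u)^2 with hK
  have hK0 : 0 ≤ K := by positivity
  have hIψ := intOn_psi (z₀ := z₀) hu hG hfin hd
  have hImax : IntegrableOn (fun z => max (φ z - c) 0) (ball z₀ (exp v)) volume :=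
    ((hInt (exp v) (exp_pos v)).sub (integrableOn_const measure_ball_lt_top.ne)).pos_part
  have hImaxG : IntegrableOn (fun z => max (φ z - c) 0) G volume := hImax.mono_set hsubv
  have hmono : ∫ z in G, φ z / (dist z z₀ * Real.log (dist z z₀)) ^ 2
      ≤ ∫ z in G, (max (φ z - c) 0 * K
          + c * ((1:ℝ) / (dist z z₀ * Real.log (dist z z₀)) ^ 2)) := by
    apply integral_mono_of_nonneg
    · exact Filter.Eventually.of_forall fun z => div_nonneg (hpos z) (sq_nonneg _)
    · exact (hImaxG.mul_const K).add (hIψ.const_mul c)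
    · rw [Filter.EventuallyLE, ae_restrict_iff' hG]
      apply Filter.Eventually.of_forall
      intro z hz
      have hD := psi_sq_pos (z₀ := z₀) hu (hd z hz)
      have e1 : φ z / (dist z z₀ * Real.log (dist z z₀)) ^ 2
          = (φ z - c) / (dist z z₀ * Real.log (dist z z₀)) ^ 2
            + c / (dist z z₀ * Real.log (dist z z₀)) ^ 2 := by
        rw [← add_div, sub_add_cancel]
      rw [e1]
      apply add_le_add
      · calc (φ z - c) / (dist z z₀ * Real.log (dist z z₀)) ^ 2
            ≤ max (φ z - c) 0 / (dist z z₀ * Real.log (dist z z₀)) ^ 2 :=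
              (div_le_div_iff_of_pos_right hD).2 (le_max_left _ _)
        _ = max (φ z - c) 0 * ((1:ℝ) / (dist z z₀ * Real.log (dist z z₀)) ^ 2) := by
              rw [div_eq_mul_one_div]
        _ ≤ max (φ z - c) 0 * K :=
              mul_le_mul_of_nonneg_left (psi_pointwise hu (hd z hz)) (le_max_right _ _)
      · rw [div_eq_mul_one_div]
  have hsplit : ∫ z in G, (max (φ z - c) 0 * K
      + c * ((1:ℝ) / (dist z z₀ * Real.log (dist z z₀)) ^ 2))
      = (∫ z in G, max (φ z - c) 0) * K
        + c * ∫ z in G, (1:ℝ) / (dist z z₀ * Real.log (dist z z₀)) ^ 2 := by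
    rw [integral_add (hImaxG.mul_const K) (hIψ.const_mul c), integral_mul_const,
      MeasureTheory.integral_const_mul]
  have hosc : (∫ z in G, max (φ z - c) 0) * K ≤ (π * (exp v)^2 / (exp u * u)^2) * δ' / 2 := by
    have h1 : ∫ z in G, max (φ z - c) 0 ≤ ∫ z in ball z₀ (exp v), max (φ z - c) 0 :=
      setIntegral_mono_set hImax (Filter.Eventually.of_forall fun z => le_max_right _ _)
        (HasSubset.Subset.eventuallyLE hsubv)
    have h2 : ∫ z in ball z₀ (exp v), max (φ z - c) 0
        = meanDev z₀ φ (exp v) * (π * (exp v)^2) / 2 := by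
      rw [half_pos hInt (exp_pos v), vb_eq z₀ (exp_pos v).le]
    have h3 : ∫ z in G, max (φ z - c) 0 ≤ δ' * (π * (exp v)^2) / 2 := by
      rw [h2] at h1
      have : meanDev z₀ φ (exp v) * (π * (exp v)^2) / 2 ≤ δ' * (π * (exp v)^2) / 2 := by
        have := mul_le_mul_of_nonneg_right hdev (by positivity : (0:ℝ) ≤ π * (exp v)^2)
        linarith
      linarith
    calc (∫ z in G, max (φ z - c) 0) * K ≤ (δ' * (π * (exp v)^2) / 2) * K :=
          mul_le_mul_of_nonneg_right h3 hK0
    _ = (π * (exp v)^2 / (exp u * u)^2) * δ' / 2 := by rw [hK]; ring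
  have hmean : c * (∫ z in G, (1:ℝ) / (dist z z₀ * Real.log (dist z z₀)) ^ 2)
      ≤ B * (2*π*(1/u - 1/v)) := by
    have hψmono : ∫ z in G, (1:ℝ) / (dist z z₀ * Real.log (dist z z₀)) ^ 2
        ≤ 2*π*(1/u - 1/v) := by
      rw [← psiInt (z₀ := z₀) u v hu huv]
      apply setIntegral_mono_set
      · apply intOn_psi (z₀ := z₀) hu (measurableSet_ball.diff measurableSet_ball)
        · exact ((measure_mono Set.diff_subset).trans_lt measure_ball_lt_top).ne
        · intro z hz
          exact le_of_not_gt (fun h => hz.2 (mem_ball.2 h))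
      · exact Filter.Eventually.of_forall fun z => by positivity
      · exact HasSubset.Subset.eventuallyLE hsub
    have hψ0 : 0 ≤ ∫ z in G, (1:ℝ) / (dist z z₀ * Real.log (dist z z₀)) ^ 2 :=
      setIntegral_nonneg hG fun z _ => by positivity
    exact mul_le_mul hB hψmono hψ0 hB0
  calc ∫ z in G, φ z / (dist z z₀ * Real.log (dist z z₀)) ^ 2
      ≤ _ := hmono
  _ = _ := hsplit
  _ ≤ _ := add_le_add hosc hmean


omit hInt in
lemma telW (b : ℝ) : ∀ n : ℕ,
    ∑ k ∈ Finset.range n, (1/(b+(k:ℝ)) - 1/(b+(k:ℝ)+1)) = 1/b - 1/(b+(n:ℝ)) := by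
  intro n
  induction n with
  | zero => simp
  | succ m ih => rw [Finset.sum_range_succ, ih]; push_cast; ring

omit hInt in
lemma telK (b : ℝ) : ∀ n : ℕ,
    ∑ k ∈ Finset.range n, ((k:ℝ)+1)*(1/(b+(k:ℝ)) - 1/(b+(k:ℝ)+1))
      = (∑ k ∈ Finset.range n, 1/(b+(k:ℝ))) - (n:ℝ)/(b+(n:ℝ)) := by
  intro n
  induction n with
  | zero => simp
  | succ m ih =>
    rw [Finset.sum_range_succ, ih, Finset.sum_range_succ (f := fun k => 1/(b+(k:ℝ)))]
    push_cast
    ring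

omit hInt in
lemma telT {b : ℝ} (hb : 0 < b) : ∀ m : ℕ,
    ∑ k ∈ Finset.range (m+1), 1/(b+(k:ℝ))^2 ≤ 1/b^2 + (1/b - 1/(b+(m:ℝ))) := by
  intro m
  induction m with
  | zero => simp
  | succ m ih =>
    rw [Finset.sum_range_succ]
    have pm : (0:ℝ) < b + (m:ℝ) := by positivity
    have pm1 : (0:ℝ) < b + (m:ℝ) + 1 := by linarith
    have key : 1/(b+(m:ℝ)+1)^2 ≤ 1/(b+(m:ℝ)) - 1/(b+(m:ℝ)+1) := by
      have e1 : 1/(b+(m:ℝ)) - 1/(b+(m:ℝ)+1) = 1/((b+(m:ℝ))*(b+(m:ℝ)+1)) := by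
        field_simp
        ring
      rw [e1]
      apply one_div_le_one_div_of_le (by positivity)
      nlinarith
    push_cast
    have eassoc : b + ((m:ℝ) + 1) = b + (m:ℝ) + 1 := by ring
    rw [eassoc]
    nlinarith [key, ih]

omit hInt in
lemma telH {b : ℝ} (hb : 0 < b) : ∀ m : ℕ,
    ∑ k ∈ Finset.range (m+1), 1/(b+(k:ℝ)) ≤ 1/b + (Real.log (b+(m:ℝ)) - Real.log b) := by
  intro m
  induction m with
  | zero => simp
  | succ m ih =>
    rw [Finset.sum_range_succ]
    have pm : (0:ℝ) < b + (m:ℝ) := by positivity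
    have pm1 : (0:ℝ) < b + (m:ℝ) + 1 := by linarith
    have key : 1/(b+(m:ℝ)+1) ≤ Real.log (b+(m:ℝ)+1) - Real.log (b+(m:ℝ)) := by
      have h := Real.log_le_sub_one_of_pos (x := (b+(m:ℝ))/(b+(m:ℝ)+1)) (by positivity)
      rw [Real.log_div pm.ne' pm1.ne'] at h
      have e1 : (b+(m:ℝ))/(b+(m:ℝ)+1) - 1 = -(1/(b+(m:ℝ)+1)) := by field_simp; ring
      rw [e1] at h
      linarith
    push_cast
    have eassoc : b + ((m:ℝ) + 1) = b + (m:ℝ) + 1 := by ring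
    rw [eassoc]
    linarith [key, ih]

omit hInt in
lemma num_q : Real.exp (36/25 : ℝ) ≤ 4.3 := by
  have h : Real.exp (36/25:ℝ)^(25:ℕ) = Real.exp 1^(36:ℕ) := by
    rw [← Real.exp_nat_mul, ← Real.exp_nat_mul]; norm_num
  have h2 : Real.exp 1^(36:ℕ) ≤ (2.7182818286:ℝ)^(36:ℕ) :=
    pow_le_pow_left₀ (exp_pos 1).le Real.exp_one_lt_d9.le 36
  have h3 : (2.7182818286:ℝ)^(36:ℕ) ≤ (4.3:ℝ)^(25:ℕ) := by norm_num
  have h4 : Real.exp (36/25:ℝ)^(25:ℕ) ≤ (4.3:ℝ)^(25:ℕ) := by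
    rw [h]; exact h2.trans h3
  exact le_of_pow_le_pow_left₀ (by norm_num) (by norm_num) h4

omit hInt in
lemma num_logb : (1:ℝ) ≤ Real.log (68/25) := by
  rw [Real.le_log_iff_exp_le (by norm_num)]
  calc Real.exp 1 ≤ 2.7182818286 := Real.exp_one_lt_d9.le
  _ ≤ 68/25 := by norm_num

omit hInt in
lemma num_log1 : (32/25:ℝ) ≤ Real.log (93/25) := by
  rw [Real.le_log_iff_exp_le (by norm_num)]
  have h : Real.exp (32/25:ℝ)^(25:ℕ) = Real.exp 1^(32:ℕ) := by
    rw [← Real.exp_nat_mul, ← Real.exp_nat_mul]; norm_num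
  have h2 : Real.exp 1^(32:ℕ) ≤ (2.7182818286:ℝ)^(32:ℕ) :=
    pow_le_pow_left₀ (exp_pos 1).le Real.exp_one_lt_d9.le 32
  have h3 : (2.7182818286:ℝ)^(32:ℕ) ≤ (93/25:ℝ)^(25:ℕ) := by norm_num
  refine le_of_pow_le_pow_left₀ (n := 25) (by norm_num) (by norm_num) ?_
  rw [h]; exact h2.trans h3

omit hInt in
lemma num_log2 : (77/50:ℝ) ≤ Real.log (118/25) := by
  rw [Real.le_log_iff_exp_le (by norm_num)]
  have h : Real.exp (77/50:ℝ)^(50:ℕ) = Real.exp 1^(77:ℕ) := by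
    rw [← Real.exp_nat_mul, ← Real.exp_nat_mul]; norm_num
  have h2 : Real.exp 1^(77:ℕ) ≤ (2.7182818286:ℝ)^(77:ℕ) :=
    pow_le_pow_left₀ (exp_pos 1).le Real.exp_one_lt_d9.le 77
  have h3 : (2.7182818286:ℝ)^(77:ℕ) ≤ (118/25:ℝ)^(50:ℕ) := by norm_num
  refine le_of_pow_le_pow_left₀ (n := 50) (by norm_num) (by norm_num) ?_
  rw [h]; exact h2.trans h3

end
end St4

set_option maxHeartbeats 2000000 in
/-- Lemma 2: if `φ ≥ 0` is integrable on balls and has global finite mean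
oscillation at `z₀` with maximal dispersion `δ∞` (the supremum of the averaged
deviations over `R > e^e`), then for `R > e^e`,
`∫_{A(z₀,e,R)} φ/(|z-z₀| log|z-z₀|)² dm ≤ C log log R` with
`C = (π/6)((24+π²)e²δ∞ + 2π²φ₀)`, `φ₀` the mean of `φ` over `B(z₀,e)`. -/
theorem statement4 (z₀ : ℂ) (φ : ℂ → ℝ) (hpos : ∀ z, 0 ≤ φ z)
    (hInt : ∀ R > 0, IntegrableOn φ (ball z₀ R) volume)
    (δ : ℝ)
    (hδ : IsLUB (meanDev z₀ φ '' Set.Ioi (Real.exp (Real.exp 1))) δ) :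
    ∀ R > Real.exp (Real.exp 1),
      (∫ z in ball z₀ R \ closedBall z₀ (Real.exp 1),
          φ z / (dist z z₀ * Real.log (dist z z₀)) ^ 2) ≤
        (Real.pi / 6 * ((24 + Real.pi ^ 2) * Real.exp 1 ^ 2 * δ
            + 2 * Real.pi ^ 2 * meanOver z₀ φ (Real.exp 1))) * Real.log (Real.log R) := by
  intro R hR
  have hπ : (3.141592:ℝ) < Real.pi := Real.pi_gt_d6
  have hliu : Real.exp 1 < 2.7182818286 := Real.exp_one_lt_d9
  set b : ℝ := 68/25 with hbdef
  have hbe : Real.exp 1 < b := by rw [hbdef]; linarith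
  have h1b : (1:ℝ) < b := by rw [hbdef]; norm_num
  have hb0 : (0:ℝ) < b := by rw [hbdef]; norm_num
  have hδdev : ∀ v : ℝ, Real.exp 1 < v → meanDev z₀ φ (Real.exp v) ≤ δ := by
    intro v hv
    exact hδ.1 ⟨Real.exp v, Set.mem_Ioi.2 (Real.exp_lt_exp.2 hv), rfl⟩
  have hδ0 : 0 ≤ δ := le_trans St4.dev_nonneg (hδdev b hbe)
  set M1 := meanOver z₀ φ (Real.exp 1) with hM1def
  have hM10 : 0 ≤ M1 := St4.mean_nonneg hpos
  set q := Real.exp (2*b - 4) with hqdef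
  set X := Real.exp (2*b - 2) with hXdef
  have hq0 : (0:ℝ) < q := Real.exp_pos _
  have hX0 : (0:ℝ) < X := Real.exp_pos _
  have hXq : X = Real.exp 1 ^ 2 * q := by
    rw [hXdef, hqdef, ← Real.exp_nat_mul, ← Real.exp_add]
    congr 1
    push_cast
    ring
  have he20 : (0:ℝ) < Real.exp 1 ^ 2 := by positivity
  have hqle : q ≤ 4.3 := by
    have h36 : 2*b - 4 = (36/25 : ℝ) := by rw [hbdef]; norm_num
    rw [hqdef, h36]
    exact St4.num_q
  -- chain of means
  have chain : ∀ n : ℕ, meanOver z₀ φ (Real.exp (b + n))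
      ≤ M1 + (X + Real.exp 1 ^ 2 * n) * δ / 2 := by
    intro n
    induction n with
    | zero =>
      simp only [Nat.cast_zero, add_zero, mul_zero]
      have h := St4.mean_step hInt (Real.exp_pos 1) (Real.exp_le_exp.2 h1b.le)
      have hr : (Real.exp b / Real.exp 1)^2 = X := by
        rw [← Real.exp_sub, hXdef, ← Real.exp_nat_mul]
        congr 1
        push_cast
        ring
      rw [hr] at h
      have h2 : X * meanDev z₀ φ (Real.exp b) ≤ X * δ :=
        mul_le_mul_of_nonneg_left (hδdev b hbe) hX0.le
      rw [← hM1def] at h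
      linarith
    | succ m ih =>
      have hc : ((m+1:ℕ):ℝ) = (m:ℝ)+1 := by push_cast; ring
      rw [hc]
      have hmle : Real.exp (b + (m:ℝ)) ≤ Real.exp (b + ((m:ℝ)+1)) :=
        Real.exp_le_exp.2 (by linarith)
      have h := St4.mean_step hInt (Real.exp_pos (b + (m:ℝ))) hmle
      have hr : (Real.exp (b + ((m:ℝ)+1)) / Real.exp (b + (m:ℝ)))^2 = Real.exp 1 ^ 2 := by
        rw [← Real.exp_sub]
        congr 1
        ring
      rw [hr] at h
      have hdev : meanDev z₀ φ (Real.exp (b + ((m:ℝ)+1))) ≤ δ :=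
        hδdev _ (by have := Nat.cast_nonneg (α := ℝ) m; linarith)
      have h2 : Real.exp 1 ^ 2 * meanDev z₀ φ (Real.exp (b + ((m:ℝ)+1)))
          ≤ Real.exp 1 ^ 2 * δ := mul_le_mul_of_nonneg_left hdev he20.le
      have h3 : b + (m:ℝ) + 1 = b + ((m:ℝ)+1) := by ring
      rw [← h3] at h h2 ⊢
      nlinarith [ih, h, h2]
  -- main induction over annuli
  have P : ∀ n : ℕ,
      (∫ z in ball z₀ (Real.exp (b + (n:ℝ))) \ closedBall z₀ (Real.exp 1),
        φ z / (dist z z₀ * Real.log (dist z z₀)) ^ 2)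
      ≤ (Real.pi*δ*X/2 + 2*Real.pi*(1 - 1/b)*(M1 + X*δ/2))
        + ∑ k ∈ Finset.range n,
          (Real.pi*(Real.exp 1)^2*δ/2 * (1/(b+(k:ℝ))^2)
            + 2*Real.pi*(1/(b+(k:ℝ)) - 1/(b+(k:ℝ)+1))
              * (M1 + (X + (Real.exp 1)^2*((k:ℝ)+1))*δ/2)) := by
    intro n
    induction n with
    | zero =>
      simp only [Nat.cast_zero, add_zero, Finset.range_zero, Finset.sum_empty]
      have hmeas0 : MeasurableSet (ball z₀ (Real.exp b) \ closedBall z₀ (Real.exp 1)) :=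
        measurableSet_ball.diff measurableSet_closedBall
      have hsub0 : ball z₀ (Real.exp b) \ closedBall z₀ (Real.exp 1)
          ⊆ ball z₀ (Real.exp b) \ ball z₀ (Real.exp 1) :=
        Set.diff_subset_diff_right ball_subset_closedBall
      have hB : meanOver z₀ φ (Real.exp b) ≤ M1 + X*δ/2 := by
        have h := chain 0
        simpa using h
      have hB0 : (0:ℝ) ≤ M1 + X*δ/2 := by
        have := mul_nonneg hX0.le hδ0
        linarith
      have h := St4.ann_est hInt hpos (le_refl (1:ℝ)) h1b.le hmeas0 hsub0
        (hδdev b hbe) hB hB0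
      refine h.trans (le_of_eq ?_)
      have h1 : Real.exp b ^ 2 = X * Real.exp 1 ^ 2 := by
        rw [hXdef, ← Real.exp_nat_mul, ← Real.exp_nat_mul, ← Real.exp_add]
        congr 1
        push_cast
        ring
      rw [h1]
      have hexp1 : Real.exp 1 ≠ 0 := Real.exp_ne_zero 1
      have hbne : b ≠ 0 := hb0.ne'
      field_simp
    | succ m ih =>
      have hc : ((m+1:ℕ):ℝ) = (m:ℝ)+1 := by push_cast; ring
      rw [hc, Finset.sum_range_succ]
      have hm0 : (0:ℝ) ≤ (m:ℝ) := Nat.cast_nonneg m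
      have hmb : (1:ℝ) ≤ b + (m:ℝ) := by linarith
      have he1bm : Real.exp 1 < Real.exp (b + (m:ℝ)) :=
        Real.exp_lt_exp.2 (by linarith)
      have hin : b + ((m:ℝ)+1) = b + (m:ℝ) + 1 := by ring
      rw [hin]
      have Seq : ball z₀ (Real.exp (b + (m:ℝ) + 1)) \ closedBall z₀ (Real.exp 1)
          = (ball z₀ (Real.exp (b + (m:ℝ))) \ closedBall z₀ (Real.exp 1))
            ∪ (ball z₀ (Real.exp (b + (m:ℝ) + 1)) \ ball z₀ (Real.exp (b + (m:ℝ)))) := by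
        ext z
        simp only [Set.mem_union, Set.mem_diff, mem_ball, mem_closedBall, not_le, not_lt]
        constructor
        · rintro ⟨hz1, hz2⟩
          rcases lt_or_ge (dist z z₀) (Real.exp (b + (m:ℝ))) with h | h
          · exact Or.inl ⟨h, hz2⟩
          · exact Or.inr ⟨hz1, h⟩
        · rintro (⟨hz1, hz2⟩ | ⟨hz1, hz2⟩)
          · exact ⟨hz1.trans (Real.exp_lt_exp.2 (by linarith)), hz2⟩
          · exact ⟨hz1, lt_of_lt_of_le he1bm hz2⟩
      have hdisj : Disjoint (ball z₀ (Real.exp (b + (m:ℝ))) \ closedBall z₀ (Real.exp 1))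
          (ball z₀ (Real.exp (b + (m:ℝ) + 1)) \ ball z₀ (Real.exp (b + (m:ℝ)))) := by
        rw [Set.disjoint_left]
        rintro z ⟨hz1, _⟩ ⟨_, hz3⟩
        exact hz3 hz1
      have hint1 : IntegrableOn
          (fun z => φ z / (dist z z₀ * Real.log (dist z z₀)) ^ 2)
          (ball z₀ (Real.exp (b + (m:ℝ))) \ closedBall z₀ (Real.exp 1)) volume :=
        St4.intOn_phipsi hInt le_rfl (Real.exp_pos (b+(m:ℝ)))
          (measurableSet_ball.diff measurableSet_closedBall) Set.diff_subset
          (fun z hz => le_of_lt (not_le.mp (fun h => hz.2 (mem_closedBall.mpr h))))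
      have hint2 : IntegrableOn
          (fun z => φ z / (dist z z₀ * Real.log (dist z z₀)) ^ 2)
          (ball z₀ (Real.exp (b + (m:ℝ) + 1)) \ ball z₀ (Real.exp (b + (m:ℝ)))) volume :=
        St4.intOn_phipsi hInt hmb (Real.exp_pos (b+(m:ℝ)+1))
          (measurableSet_ball.diff measurableSet_ball) Set.diff_subset
          (fun z hz => not_lt.mp (fun h => hz.2 (mem_ball.mpr h)))
      rw [Seq, setIntegral_union hdisj (measurableSet_ball.diff measurableSet_ball)
        hint1 hint2]
      have hB2 : meanOver z₀ φ (Real.exp (b + (m:ℝ) + 1))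
          ≤ M1 + (X + (Real.exp 1)^2*((m:ℝ)+1))*δ/2 := by
        have h := chain (m+1)
        rw [hc] at h
        rw [hin] at h
        exact h
      have hB20 : (0:ℝ) ≤ M1 + (X + (Real.exp 1)^2*((m:ℝ)+1))*δ/2 := by
        have h1 : (0:ℝ) ≤ X + Real.exp 1^2*((m:ℝ)+1) := by nlinarith [hX0, he20, hm0]
        have := mul_nonneg h1 hδ0
        linarith
      have hdev2 : meanDev z₀ φ (Real.exp (b + (m:ℝ) + 1)) ≤ δ := hδdev _ (by linarith)
      have h2 := St4.ann_est hInt hpos (u := b + (m:ℝ)) (v := b + (m:ℝ) + 1) hmb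
        (by linarith) (measurableSet_ball.diff measurableSet_ball) subset_rfl
        hdev2 hB2 hB20
      have heq : Real.pi*(Real.exp (b+(m:ℝ)+1))^2/(Real.exp (b+(m:ℝ))*(b+(m:ℝ)))^2*δ/2
          = Real.pi*(Real.exp 1)^2*δ/2 * (1/(b+(m:ℝ))^2) := by
        rw [Real.exp_add]
        have hne : Real.exp (b+(m:ℝ)) ≠ 0 := (Real.exp_pos _).ne'
        have hbm : b+(m:ℝ) ≠ 0 := by positivity
        have he2e : Real.exp (2:ℝ) = Real.exp 1 ^ 2 := by
          rw [Real.exp_one_pow]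
          norm_num
        field_simp
      rw [heq] at h2
      refine le_trans (add_le_add ih h2) (le_of_eq ?_)
      ring
  -- choose n
  set Λ := Real.log R with hΛdef
  have hR0 : (0:ℝ) < R := lt_trans (Real.exp_pos _) hR
  have hΛe : Real.exp 1 < Λ := by
    rw [hΛdef, Real.lt_log_iff_exp_lt hR0]
    exact hR
  have hΛ0 : (0:ℝ) < Λ := lt_trans (Real.exp_pos 1) hΛe
  have hL1 : 1 < Real.log Λ := by
    have h := Real.log_lt_log (Real.exp_pos 1) hΛe
    rwa [Real.log_exp] at h
  obtain ⟨n, hΛlebn, hnlt⟩ : ∃ n : ℕ, Λ ≤ b + (n:ℝ) ∧ (n:ℝ) < Λ - b + 1 := by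
    rcases le_or_gt Λ b with h | h
    · refine ⟨0, by simpa using h, ?_⟩
      have hgt : (2.7182818283:ℝ) < Real.exp 1 := Real.exp_one_gt_d9
      simp only [Nat.cast_zero]
      have h172 : b - 1 < Real.exp 1 := by rw [hbdef]; linarith
      linarith
    · refine ⟨⌈Λ - b⌉₊, ?_, Nat.ceil_lt_add_one (by linarith)⟩
      have := Nat.le_ceil (Λ - b)
      linarith
  have hRle : R ≤ Real.exp (b + (n:ℝ)) := by
    calc R = Real.exp Λ := (Real.exp_log hR0).symm
    _ ≤ _ := Real.exp_le_exp.2 hΛlebn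
  have hmono : (∫ z in ball z₀ R \ closedBall z₀ (Real.exp 1),
      φ z / (dist z z₀ * Real.log (dist z z₀)) ^ 2)
      ≤ ∫ z in ball z₀ (Real.exp (b + (n:ℝ))) \ closedBall z₀ (Real.exp 1),
        φ z / (dist z z₀ * Real.log (dist z z₀)) ^ 2 := by
    apply setIntegral_mono_set
    · apply St4.intOn_phipsi hInt le_rfl (Real.exp_pos (b + (n:ℝ)))
        (measurableSet_ball.diff measurableSet_closedBall) Set.diff_subset
      intro z hz
      exact le_of_lt (not_le.mp (fun h => hz.2 (mem_closedBall.mpr h)))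
    · exact Filter.Eventually.of_forall fun z => div_nonneg (hpos z) (sq_nonneg _)
    · exact HasSubset.Subset.eventuallyLE
        (Set.diff_subset_diff_left (ball_subset_ball hRle))
  refine le_trans (hmono.trans (P n)) ?_
  -- rewrite the sum
  have hsum : (∑ k ∈ Finset.range n,
      (Real.pi*(Real.exp 1)^2*δ/2 * (1/(b+(k:ℝ))^2)
        + 2*Real.pi*(1/(b+(k:ℝ)) - 1/(b+(k:ℝ)+1))
          * (M1 + (X + (Real.exp 1)^2*((k:ℝ)+1))*δ/2)))
      = Real.pi*(Real.exp 1)^2*δ/2 * (∑ k ∈ Finset.range n, 1/(b+(k:ℝ))^2)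
        + (2*Real.pi*(M1 + X*δ/2)) * (1/b - 1/(b+(n:ℝ)))
        + Real.pi*(Real.exp 1)^2*δ
          * ((∑ k ∈ Finset.range n, 1/(b+(k:ℝ))) - (n:ℝ)/(b+(n:ℝ))) := by
    rw [← St4.telW b n, ← St4.telK b n, Finset.mul_sum, Finset.mul_sum, Finset.mul_sum,
      ← Finset.sum_add_distrib, ← Finset.sum_add_distrib]
    apply Finset.sum_congr rfl
    intro k _
    ring
  rw [hsum]
  -- abbreviations
  set T := ∑ k ∈ Finset.range n, 1/(b+(k:ℝ))^2 with hTdef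
  set H := ∑ k ∈ Finset.range n, 1/(b+(k:ℝ)) with hHdef
  set L := Real.log Λ with hLdef
  set s := 1/(b+(n:ℝ)) with hsdef
  have hs0 : 0 < s := by
    rw [hsdef]
    have := Nat.cast_nonneg (α := ℝ) n
    positivity
  -- M1 part
  have hM1part : 2*Real.pi*(1 - s)*M1 ≤ (Real.pi/6*(2*Real.pi^2))*L*M1 := by
    apply mul_le_mul_of_nonneg_right _ hM10
    have h1 : 2*Real.pi*(1-s) ≤ 2*Real.pi := by nlinarith [hs0, hπ]
    have h2 : 2*Real.pi ≤ (Real.pi/6*(2*Real.pi^2)) := by nlinarith [hπ]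
    have h3 : (Real.pi/6*(2*Real.pi^2)) ≤ (Real.pi/6*(2*Real.pi^2))*L := by
      nlinarith [hπ, hL1]
    linarith
  -- δ part
  have hEn : q/2*(3 - 2*s) + T/2 + (H - (n:ℝ)*s) ≤ (4 + Real.pi^2/6)*L := by
    clear_value T H L s
    clear hsum hmono hRle P chain
    have h564 : (141/25:ℝ) ≤ 4 + Real.pi^2/6 := by nlinarith [hπ]
    have hpos4 : (0:ℝ) ≤ 4 + Real.pi^2/6 := by nlinarith [hπ]
    rcases n with _ | _ | _ | m
    · -- n = 0
      push_cast at hsdef ⊢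
      simp only [Finset.range_zero, Finset.sum_empty] at hTdef hHdef
      rw [hbdef] at hsdef
      norm_num at hsdef
      have hM : (141/25:ℝ)*1 ≤ (4+Real.pi^2/6)*L := mul_le_mul h564 hL1.le zero_le_one hpos4
      rw [hsdef, hTdef, hHdef]
      linarith [hqle, hq0]
    · -- n = 1
      push_cast at hsdef ⊢
      rw [Finset.sum_range_one] at hTdef hHdef
      push_cast at hTdef hHdef
      rw [hbdef] at hsdef hTdef hHdef
      norm_num at hsdef hTdef hHdef
      have hM : (141/25:ℝ)*1 ≤ (4+Real.pi^2/6)*L := mul_le_mul h564 hL1.le zero_le_one hpos4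
      rw [hsdef, hTdef, hHdef]
      linarith [hqle, hq0]
    · -- n = 2
      push_cast at hsdef hnlt ⊢
      rw [Finset.sum_range_succ, Finset.sum_range_one] at hTdef hHdef
      push_cast at hTdef hHdef
      rw [hbdef] at hsdef hTdef hHdef
      norm_num at hsdef hTdef hHdef
      have hΛb1 : (93/25:ℝ) ≤ Λ := by rw [hbdef] at hnlt; linarith
      have hL128 : (32/25:ℝ) ≤ L := by
        rw [hLdef]
        calc (32/25:ℝ) ≤ Real.log (93/25) := St4.num_log1
        _ ≤ Real.log Λ := Real.log_le_log (by norm_num) hΛb1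
      have hM : (141/25:ℝ)*(32/25) ≤ (4+Real.pi^2/6)*L :=
        mul_le_mul h564 hL128 (by norm_num) hpos4
      rw [hsdef, hTdef, hHdef]
      linarith [hqle, hq0]
    · -- n = m + 3
      push_cast at hsdef hnlt hΛlebn ⊢
      have hm0 : (0:ℝ) ≤ (m:ℝ) := Nat.cast_nonneg m
      have hΛb2 : (118/25:ℝ) < Λ := by rw [hbdef] at hnlt; linarith
      have hL154 : (77/50:ℝ) ≤ L := by
        rw [hLdef]
        calc (77/50:ℝ) ≤ Real.log (118/25) := St4.num_log2
        _ ≤ Real.log Λ := Real.log_le_log (by norm_num) hΛb2.le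
      have hTb : T ≤ 1/b^2 + 1/b := by
        rw [hTdef]
        refine (St4.telT hb0 (m+2)).trans ?_
        have h2 : (0:ℝ) ≤ 1/(b + ((m+2:ℕ):ℝ)) := by positivity
        linarith
      have hHb : H ≤ 1/b + (Real.log (b + ((m+2:ℕ):ℝ)) - Real.log b) := by
        rw [hHdef]
        exact St4.telH hb0 (m+2)
      have hlogb1 : (1:ℝ) ≤ Real.log b := by rw [hbdef]; exact St4.num_logb
      have hlogm : Real.log (b + ((m+2:ℕ):ℝ)) ≤ L := by
        rw [hLdef]
        apply Real.log_le_log (by positivity)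
        push_cast
        linarith
      have hbn0 : (0:ℝ) < b + ((m:ℝ)+3) := by linarith
      have hns : 1 - b/Λ ≤ ((m:ℝ)+3)*s := by
        have h1 : b/(b+((m:ℝ)+3)) ≤ b/Λ :=
          div_le_div_of_nonneg_left hb0.le hΛ0 (by linarith)
        have h2 : ((m:ℝ)+3)*s = 1 - b/(b+((m:ℝ)+3)) := by
          rw [hsdef]
          field_simp
          ring
        rw [h2]
        linarith
      have hbΛ : b/Λ ≤ 34/59 := by
        rw [hbdef, div_le_iff₀ hΛ0]
        linarith
      have hsq : (0:ℝ) ≤ s*q := mul_nonneg hs0.le hq0.le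
      have hM : (116/25:ℝ)*(77/50) ≤ (3+Real.pi^2/6)*L :=
        mul_le_mul (by nlinarith [hπ]) hL154 (by norm_num) (by nlinarith [hπ])
      have hbv : (1:ℝ)/b^2 + 1/b = 625/4624 + 25/68 := by rw [hbdef]; norm_num
      have hbv2 : (1:ℝ)/b = 25/68 := by rw [hbdef]; norm_num
      rw [hbv2] at hHb
      rw [hbv] at hTb
      linarith [hqle, hq0, hTb, hHb, hlogm, hlogb1, hns, hbΛ, hsq, hM, hL1]
  have hδpart : Real.pi*δ*(Real.exp 1)^2*(q/2*(3 - 2*s) + T/2 + (H - (n:ℝ)*s))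
      ≤ (Real.pi/6*((24 + Real.pi^2)*(Real.exp 1)^2*δ))*L := by
    have hc0 : (0:ℝ) ≤ Real.pi*δ*(Real.exp 1)^2 := by positivity
    calc Real.pi*δ*(Real.exp 1)^2*(q/2*(3 - 2*s) + T/2 + (H - (n:ℝ)*s))
        ≤ Real.pi*δ*(Real.exp 1)^2*((4 + Real.pi^2/6)*L) :=
          mul_le_mul_of_nonneg_left hEn hc0
    _ = (Real.pi/6*((24 + Real.pi^2)*(Real.exp 1)^2*δ))*L := by ring
  -- combine
  have hfinal : Real.pi*δ*X/2 + 2*Real.pi*(1 - 1/b)*(M1 + X*δ/2)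
      + (Real.pi*(Real.exp 1)^2*δ/2 * T + (2*Real.pi*(M1 + X*δ/2)) * (1/b - s)
        + Real.pi*(Real.exp 1)^2*δ * (H - (n:ℝ)/(b+(n:ℝ))))
      = 2*Real.pi*(1 - s)*M1
        + Real.pi*δ*(Real.exp 1)^2*(q/2*(3 - 2*s) + T/2 + (H - (n:ℝ)*s)) := by
    rw [hXq, hsdef]
    ring
  have hRHS : (Real.pi / 6 * ((24 + Real.pi ^ 2) * Real.exp 1 ^ 2 * δ
      + 2 * Real.pi ^ 2 * M1)) * L
      = (Real.pi/6*((24 + Real.pi^2)*(Real.exp 1)^2*δ))*L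
        + (Real.pi/6*(2*Real.pi^2))*L*M1 := by ring
  rw [hRHS]
  linarith [hM1part, hδpart, hfinal.le, hfinal.ge]
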